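/- Under the hypotheses of the Weak Aggregating Algorithm lemma (positive weights q_k summing to 1, losses l_n^{(k)} ∈ [−L, L], p_n^{(k)} the normalized weights with β_n = exp(−1/√n), and learner's loss satisfying l_n ≤ ∑_k p_n^{(k)} l_n^{(k)}), for all N ≥ 1 and every expert K: L_N ≤ L_N^{(K)} + (L² e^L + ln(1/q_K)) √N. -/

import Mathlib

open Real Finset

lemma exp_quad (t : ℝ) : Real.exp t ≤ 1 + t + t^2/2 * Real.exp |t| := by
  rcases le_or_gt t 0 with ht | ht
  · rw [abs_of_nonpos ht]
    have h3 := Real.sum_le_exp_of_nonneg (neg_nonneg.2 ht) 3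
    have hs : ∑ i ∈ Finset.range 3, (-t) ^ i / (i.factorial : ℝ) = 1 + -t + t^2/2 := by
      simp [Finset.sum_range_succ, Nat.factorial]
    rw [hs] at h3
    have hmul : Real.exp t * Real.exp (-t) = 1 := by
      rw [← Real.exp_add]; simp
    have h1 : (1:ℝ) ≤ Real.exp (-t) := Real.one_le_exp (by linarith)
    have hpos : 0 < 1 + -t + t^2/2 := by nlinarith [sq_nonneg (t-1)]
    have hp1 : Real.exp t * (1 + -t + t^2/2) ≤ 1 := by
      nlinarith [mul_le_mul_of_nonneg_left h3 (Real.exp_pos t).le, hmul]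
    have hle : Real.exp t ≤ 1 + t + t^2/2 := by
      nlinarith [hp1, hpos, sq_nonneg (t*t)]
    nlinarith [hle, mul_nonneg (sq_nonneg t) (sub_nonneg.2 h1)]
  · rw [abs_of_pos ht]
    have key : MonotoneOn (fun s : ℝ => 1 + s + s^2/2 * Real.exp s - Real.exp s) (Set.Ici 0) := by
      have hd : ∀ x : ℝ, HasDerivAt (fun s : ℝ => 1 + s + s^2/2 * Real.exp s - Real.exp s)
          (1 + ((2*x^1/2) * Real.exp x + x^2/2 * Real.exp x) - Real.exp x) x := by
        intro x
        exact (((hasDerivAt_id x).const_add 1).add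
          (((hasDerivAt_pow 2 x).div_const 2).mul (Real.hasDerivAt_exp x))).sub
          (Real.hasDerivAt_exp x)
      apply monotoneOn_of_deriv_nonneg (convex_Ici 0)
      · exact (Continuous.continuousOn (by continuity))
      · intro x _; exact (hd x).differentiableAt.differentiableWithinAt
      · intro x hx
        rw [interior_Ici] at hx
        rw [(hd x).deriv]
        have h1 : (1:ℝ) - x ≤ Real.exp (-x) := by linarith [Real.add_one_le_exp (-x)]
        have hmul : Real.exp x * Real.exp (-x) = 1 := by rw [← Real.exp_add]; simp
        nlinarith [Real.exp_pos x, Real.exp_pos (-x), sq_nonneg x, (Set.mem_Ioi.1 hx).le,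
          mul_le_mul_of_nonneg_left h1 (Real.exp_pos x).le]
    have h0 := key Set.self_mem_Ici (Set.mem_Ici.2 ht.le) ht.le
    simp only [Real.exp_zero] at h0
    norm_num at h0
    linarith

lemma sum_inv_sqrt (N : ℕ) : ∑ n ∈ Finset.Icc 1 N, 1 / Real.sqrt n ≤ 2 * Real.sqrt N := by
  induction N with
  | zero => simp
  | succ m ih =>
    rw [Finset.sum_Icc_succ_top (by omega)]
    have hb : (0:ℝ) < Real.sqrt (m+1) := Real.sqrt_pos.2 (by positivity)
    have ha : (0:ℝ) ≤ Real.sqrt m := Real.sqrt_nonneg _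
    have h1 : Real.sqrt m ^ 2 = (m:ℝ) := Real.sq_sqrt (by positivity)
    have h2 : Real.sqrt ((m:ℝ)+1) ^ 2 = (m:ℝ)+1 := Real.sq_sqrt (by positivity)
    have hinv : 1 / Real.sqrt ((m:ℝ)+1) * Real.sqrt ((m:ℝ)+1) = 1 :=
      one_div_mul_cancel hb.ne'
    have key : 2 * Real.sqrt m + 1 / Real.sqrt ((m:ℝ)+1) ≤ 2 * Real.sqrt ((m:ℝ)+1) := by
      nlinarith [sq_nonneg (Real.sqrt m - Real.sqrt ((m:ℝ)+1)), hb, hinv]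
    push_cast
    push_cast at ih
    linarith

theorem waa_lemma5
    (q : ℕ → ℝ) (hq : ∀ k, 0 < q k) (hqsum : ∑' k, q k = 1)
    (L : ℝ) (l : ℕ → ℕ → ℝ) (hl : ∀ n k, |l n k| ≤ L)
    (Lc : ℕ → ℕ → ℝ) (hLc : ∀ N k, Lc N k = ∑ n ∈ Finset.Icc 1 N, l n k)
    (β : ℕ → ℝ) (hβ : ∀ n : ℕ, β n = Real.exp (-(1 / Real.sqrt n)))
    (w : ℕ → ℕ → ℝ) (hw : ∀ n k, w n k = q k * (β n) ^ (Lc (n - 1) k))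
    (p : ℕ → ℕ → ℝ) (hp : ∀ n k, p n k = w n k / ∑' j, w n j)
    (ℓ : ℕ → ℝ) (hℓ : ∀ n, ℓ n ≤ ∑' k, p n k * l n k)
    (N : ℕ) (hN : 1 ≤ N) (K : ℕ) :
    ∑ n ∈ Finset.Icc 1 N, ℓ n ≤
      Lc N K + (L ^ 2 * Real.exp L + Real.log (1 / q K)) * Real.sqrt N := by
  have hL0 : 0 ≤ L := le_trans (abs_nonneg _) (hl 0 0)
  set D2 : ℝ := L ^ 2 * Real.exp L with hD2
  have hD2nn : 0 ≤ D2 := by positivity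
  have hqs : Summable q := by
    by_contra h
    rw [tsum_eq_zero_of_not_summable h] at hqsum
    norm_num at hqsum
  have hLcabs : ∀ m k, |Lc m k| ≤ m * L := by
    intro m k
    rw [hLc]
    calc |∑ n ∈ Finset.Icc 1 m, l n k| ≤ ∑ n ∈ Finset.Icc 1 m, |l n k| :=
          Finset.abs_sum_le_sum_abs _ _
      _ ≤ ∑ n ∈ Finset.Icc 1 m, L := Finset.sum_le_sum fun i _ => hl i k
      _ = m * L := by rw [Finset.sum_const, Nat.card_Icc]; simp [nsmul_eq_mul]
  -- the aggregated weight function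
  set G : ℕ → ℝ → ℝ := fun m c => ∑' k, q k * Real.exp (-(Lc m k) / c) with hG
  set F : ℕ → ℝ := fun m => -Real.sqrt m * Real.log (G m (Real.sqrt m)) with hF
  have hsumG : ∀ (m : ℕ) (c : ℝ), 0 < c →
      Summable (fun k => q k * Real.exp (-(Lc m k) / c)) := by
    intro m c hc
    apply Summable.of_nonneg_of_le (fun k => (mul_pos (hq k) (Real.exp_pos _)).le)
      (fun k => ?_) (hqs.mul_right (Real.exp (m * L / c)))
    have h1 : -(Lc m k) / c ≤ m * L / c := by
      apply div_le_div_of_nonneg_right ?_ hc.le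
      linarith [hLcabs m k, neg_abs_le (Lc m k), abs_nonneg (Lc m k)]
    exact mul_le_mul_of_nonneg_left (Real.exp_le_exp.2 h1) (hq k).le
  have hGpos : ∀ (m : ℕ) (c : ℝ), 0 < c → 0 < G m c := by
    intro m c hc
    have h0 : 0 < q 0 * Real.exp (-(Lc m 0) / c) := mul_pos (hq 0) (Real.exp_pos _)
    exact lt_of_lt_of_le h0 (Summable.le_tsum (hsumG m c hc) 0
      (fun j _ => (mul_pos (hq j) (Real.exp_pos _)).le))
  have hLcrec : ∀ (n : ℕ) k, Lc (n + 1) k = Lc n k + l (n + 1) k := by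
    intro n k
    rw [hLc, hLc, Finset.sum_Icc_succ_top (by omega)]
  have hLc0 : ∀ k, Lc 0 k = 0 := by intro k; rw [hLc]; simp
  have step : ∀ n : ℕ, ℓ (n + 1) ≤ F (n + 1) +
      Real.sqrt (n + 1) * Real.log (G n (Real.sqrt (n + 1))) +
      D2 / (2 * Real.sqrt (n + 1)) := by
    intro n
    have hcast : ((n + 1 : ℕ) : ℝ) = (n : ℝ) + 1 := by push_cast; ring
    set c : ℝ := Real.sqrt ((n : ℝ) + 1) with hcdef
    have hc1 : (1 : ℝ) ≤ c := by
      have h := Real.sqrt_le_sqrt (show (1:ℝ) ≤ (n:ℝ) + 1 by linarith [Nat.cast_nonneg (α := ℝ) n])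
      rwa [Real.sqrt_one] at h
    have hcpos : (0 : ℝ) < c := lt_of_lt_of_le one_pos hc1
    have hwe : ∀ k, w (n + 1) k = q k * Real.exp (-(Lc n k) / c) := by
      intro k
      rw [hw, hβ, Nat.add_sub_cancel, hcast, ← hcdef,
        Real.rpow_def_of_pos (Real.exp_pos _), Real.log_exp]
      congr 1
      field_simp
    have hWsum : Summable (fun k => q k * Real.exp (-(Lc n k) / c)) := hsumG n c hcpos
    have hW : 0 < G n c := hGpos n c hcpos
    have htw : (∑' j, w (n + 1) j) = G n c := by
      simp only [hG]; exact tsum_congr hwe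
    have hpe : ∀ k, p (n + 1) k = q k * Real.exp (-(Lc n k) / c) / G n c := by
      intro k; rw [hp, htw, hwe]
    have hps : Summable (p (n + 1)) := by
      apply Summable.congr (hWsum.div_const (G n c))
      intro k; rw [hpe]
    have hppos : ∀ k, 0 ≤ p (n + 1) k := by
      intro k; rw [hpe]
      exact div_nonneg (mul_pos (hq k) (Real.exp_pos _)).le hW.le
    have hprod : ∀ k, p (n + 1) k * Real.exp (-(l (n + 1) k) / c)
        = q k * Real.exp (-(Lc (n + 1) k) / c) / G n c := by
      intro k
      rw [hpe, hLcrec, div_mul_eq_mul_div, mul_assoc, ← Real.exp_add]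
      have : -(Lc n k) / c + -(l (n + 1) k) / c = -(Lc n k + l (n + 1) k) / c := by ring
      rw [this]
    have sA : Summable (fun k => p (n + 1) k * Real.exp (-(l (n + 1) k) / c)) := by
      apply Summable.congr ((hsumG (n + 1) c hcpos).div_const (G n c))
      intro k; rw [hprod]
    have hS : (∑' k, p (n + 1) k * Real.exp (-(l (n + 1) k) / c)) = G (n + 1) c / G n c := by
      rw [tsum_congr hprod, tsum_div_const]
    have hpsum1 : (∑' k, p (n + 1) k) = 1 := by
      rw [tsum_congr hpe, tsum_div_const]
      have : (∑' k, q k * Real.exp (-(Lc n k) / c)) = G n c := by simp only [hG]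
      rw [this, div_self hW.ne']
    have hpt : ∀ k, p (n + 1) k * l (n + 1) k ≤
        p (n + 1) k * (c + D2 / (2 * c) - c * Real.exp (-(l (n + 1) k) / c)) := by
      intro k
      apply mul_le_mul_of_nonneg_left _ (hppos k)
      set x := l (n + 1) k with hxdef
      have hxL : |x| ≤ L := hl _ _
      have hx2 : x ^ 2 ≤ L ^ 2 := by
        rw [← sq_abs]; exact pow_le_pow_left₀ (abs_nonneg x) hxL 2
      have h1 := exp_quad (-x / c)
      have habs : |(-x / c)| = |x| / c := by
        rw [abs_div, abs_neg, abs_of_pos hcpos]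
      rw [habs] at h1
      have h2 : Real.exp (|x| / c) ≤ Real.exp L :=
        Real.exp_le_exp.2 (le_trans (div_le_self (abs_nonneg x) hc1) hxL)
      have h4 : Real.exp (-x / c) ≤ 1 + (-x / c) + (x ^ 2 / c ^ 2) / 2 * Real.exp L := by
        have e1 : (-x / c) ^ 2 = x ^ 2 / c ^ 2 := by ring
        rw [e1] at h1
        have h2' : (x ^ 2 / c ^ 2) / 2 * Real.exp (|x| / c) ≤ (x ^ 2 / c ^ 2) / 2 * Real.exp L :=
          mul_le_mul_of_nonneg_left h2 (by positivity)
        linarith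
      have h5 : c * Real.exp (-x / c) ≤ c * (1 + (-x / c) + (x ^ 2 / c ^ 2) / 2 * Real.exp L) :=
        mul_le_mul_of_nonneg_left h4 hcpos.le
      have h6 : c * (1 + (-x / c) + (x ^ 2 / c ^ 2) / 2 * Real.exp L)
          = c - x + (x ^ 2 * Real.exp L) / (2 * c) := by
        field_simp
        ring
      have h7 : (x ^ 2 * Real.exp L) / (2 * c) ≤ D2 / (2 * c) := by
        rw [hD2]
        apply div_le_div_of_nonneg_right
          (mul_le_mul_of_nonneg_right hx2 (Real.exp_pos L).le) (by linarith)
      linarith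
    have s1 : Summable (fun k => p (n + 1) k * l (n + 1) k) := by
      apply Summable.of_abs
      apply Summable.of_nonneg_of_le (fun k => abs_nonneg _) (fun k => ?_) (hps.mul_right L)
      rw [abs_mul, abs_of_nonneg (hppos k)]
      exact mul_le_mul_of_nonneg_left (hl _ _) (hppos k)
    have s2 : Summable (fun k => p (n + 1) k *
        (c + D2 / (2 * c) - c * Real.exp (-(l (n + 1) k) / c))) := by
      apply Summable.congr ((hps.mul_left (c + D2 / (2 * c))).sub (sA.mul_left c))
      intro k; ring
    have hone : 1 + Real.log (G (n + 1) c / G n c) ≤ G (n + 1) c / G n c := by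
      linarith [Real.log_le_sub_one_of_pos (div_pos (hGpos (n + 1) c hcpos) hW)]
    calc ℓ (n + 1) ≤ ∑' k, p (n + 1) k * l (n + 1) k := hℓ _
      _ ≤ ∑' k, p (n + 1) k * (c + D2 / (2 * c) - c * Real.exp (-(l (n + 1) k) / c)) :=
          Summable.tsum_le_tsum hpt s1 s2
      _ = (c + D2 / (2 * c)) * (∑' k, p (n + 1) k)
          - c * (∑' k, p (n + 1) k * Real.exp (-(l (n + 1) k) / c)) := by
          rw [← tsum_mul_left, ← tsum_mul_left, ← Summable.tsum_sub (hps.mul_left _) (sA.mul_left c)]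
          exact tsum_congr fun k => by ring
      _ = c + D2 / (2 * c) - c * (G (n + 1) c / G n c) := by rw [hpsum1, hS, mul_one]
      _ ≤ c + D2 / (2 * c) - c * (1 + Real.log (G (n + 1) c / G n c)) := by
          nlinarith [mul_le_mul_of_nonneg_left hone hcpos.le]
      _ = F (n + 1) + c * Real.log (G n c) + D2 / (2 * c) := by
          rw [Real.log_div (hGpos (n + 1) c hcpos).ne' hW.ne']
          simp only [hF]
          rw [hcast, ← hcdef]
          ring
  have hG0 : ∀ c : ℝ, G 0 c = 1 := by
    intro c
    have e : ∀ k : ℕ, q k * Real.exp (-(Lc 0 k) / c) = q k := by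
      intro k; rw [hLc0]; norm_num
    simp only [hG]
    rw [tsum_congr e, hqsum]
  have mono : ∀ n : ℕ, Real.sqrt (n + 1) * Real.log (G n (Real.sqrt (n + 1))) ≤
      Real.sqrt n * Real.log (G n (Real.sqrt n)) := by
    intro n
    rcases Nat.eq_zero_or_pos n with rfl | hpos
    · simp [hG0]
    · have hc1 : (0:ℝ) < Real.sqrt n := Real.sqrt_pos.2 (by exact_mod_cast hpos)
      have hlt : Real.sqrt (n : ℝ) < Real.sqrt ((n : ℝ) + 1) := by
        apply Real.sqrt_lt_sqrt (Nat.cast_nonneg n); linarith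
      set c1 := Real.sqrt (n : ℝ) with hc1def
      set c2 := Real.sqrt ((n : ℝ) + 1) with hc2def
      have hc2 : 0 < c2 := lt_trans hc1 hlt
      set θ := c1 / c2 with hθ
      have hθ0 : 0 < θ := div_pos hc1 hc2
      have hθ1 : θ < 1 := (div_lt_one hc2).2 hlt
      have hG1pos := hGpos n c1 hc1
      have hG2pos := hGpos n c2 hc2
      have key : G n c2 ≤ (G n c1) ^ θ := by
        set u : ℕ → ENNReal := fun k => ENNReal.ofReal (q k) with hu
        set v : ℕ → ENNReal := fun k => ENNReal.ofReal (q k * Real.exp (-(Lc n k) / c1)) with hv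
        have h1θ : (0:ℝ) < 1 - θ := by linarith
        have hpq : ((1 - θ)⁻¹).HolderConjugate θ⁻¹ := by
          rw [Real.holderConjugate_iff]
          constructor
          · exact (one_lt_inv₀ h1θ).2 (by linarith)
          · rw [inv_inv, inv_inv]; ring
        have hmeas : ∀ f : ℕ → ENNReal, AEMeasurable f MeasureTheory.Measure.count :=
          fun f => (measurable_of_countable f).aemeasurable
        have e0 : ∀ k : ℕ, u k ^ (1 - θ) * v k ^ θ
            = ENNReal.ofReal (q k * Real.exp (-(Lc n k) / c2)) := by
          intro k
          rw [hu, hv]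
          simp only
          rw [ENNReal.ofReal_rpow_of_pos (hq k),
            ENNReal.ofReal_rpow_of_pos (mul_pos (hq k) (Real.exp_pos _)),
            ← ENNReal.ofReal_mul (Real.rpow_nonneg (hq k).le _)]
          congr 1
          rw [Real.mul_rpow (hq k).le (Real.exp_pos _).le, ← mul_assoc,
            ← Real.rpow_add (hq k), sub_add_cancel, Real.rpow_one]
          congr 1
          rw [Real.rpow_def_of_pos (Real.exp_pos _), Real.log_exp]
          congr 1
          rw [hθ]
          field_simp
        have e1 : ∀ k : ℕ, (u k ^ (1 - θ)) ^ ((1 - θ)⁻¹) = u k := by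
          intro k
          rw [← ENNReal.rpow_mul, mul_inv_cancel₀ h1θ.ne', ENNReal.rpow_one]
        have e2 : ∀ k : ℕ, (v k ^ θ) ^ (θ⁻¹) = v k := by
          intro k
          rw [← ENNReal.rpow_mul, mul_inv_cancel₀ hθ0.ne', ENNReal.rpow_one]
        have s_u : ∑' k, u k = 1 := by
          rw [hu, ← ENNReal.ofReal_tsum_of_nonneg (fun k => (hq k).le) hqs, hqsum,
            ENNReal.ofReal_one]
        have s_v : ∑' k, v k = ENNReal.ofReal (G n c1) := by
          simp only [hv, hG]
          exact (ENNReal.ofReal_tsum_of_nonneg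
            (fun k => (mul_pos (hq k) (Real.exp_pos _)).le) (hsumG n c1 hc1)).symm
        have s_w : ∑' (k : ℕ), ENNReal.ofReal (q k * Real.exp (-(Lc n k) / c2))
            = ENNReal.ofReal (G n c2) := by
          simp only [hG]
          exact (ENNReal.ofReal_tsum_of_nonneg
            (fun k => (mul_pos (hq k) (Real.exp_pos _)).le) (hsumG n c2 hc2)).symm
        have hfinal : ENNReal.ofReal (G n c2) ≤ ENNReal.ofReal ((G n c1) ^ θ) := by
          calc ENNReal.ofReal (G n c2) = ∑' k, u k ^ (1 - θ) * v k ^ θ := by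
                rw [← s_w]; exact tsum_congr fun k => (e0 k).symm
            _ ≤ (∑' k, (u k ^ (1 - θ)) ^ ((1 - θ)⁻¹)) ^ (1 / (1 - θ)⁻¹)
                * (∑' k, (v k ^ θ) ^ (θ⁻¹)) ^ (1 / θ⁻¹) := by
                have hold := ENNReal.lintegral_mul_le_Lp_mul_Lq MeasureTheory.Measure.count hpq
                  (hmeas fun k => u k ^ (1 - θ)) (hmeas fun k => v k ^ θ)
                simpa [MeasureTheory.lintegral_count] using hold
            _ = (∑' k, u k) ^ (1 - θ) * (∑' k, v k) ^ θ := by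
                rw [tsum_congr e1, tsum_congr e2, one_div, one_div, inv_inv, inv_inv]
            _ = ENNReal.ofReal ((G n c1) ^ θ) := by
                rw [s_u, s_v, ENNReal.one_rpow, one_mul,
                  ENNReal.ofReal_rpow_of_pos hG1pos]
        exact (ENNReal.ofReal_le_ofReal_iff (Real.rpow_nonneg hG1pos.le θ)).1 hfinal
      have hlog : Real.log (G n c2) ≤ θ * Real.log (G n c1) := by
        calc Real.log (G n c2) ≤ Real.log ((G n c1) ^ θ) := Real.log_le_log hG2pos key
          _ = θ * Real.log (G n c1) := Real.log_rpow hG1pos θ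
      calc c2 * Real.log (G n c2) ≤ c2 * (θ * Real.log (G n c1)) :=
            mul_le_mul_of_nonneg_left hlog hc2.le
        _ = c1 * Real.log (G n c1) := by
            rw [hθ]
            field_simp
  -- telescoping
  have tele : ∀ M : ℕ, ∑ n ∈ Finset.Icc 1 M, ℓ n ≤
      F M + (D2 / 2) * ∑ n ∈ Finset.Icc 1 M, 1 / Real.sqrt n := by
    intro M
    induction M with
    | zero => simp [hF]
    | succ m ih =>
      rw [Finset.sum_Icc_succ_top (by omega), Finset.sum_Icc_succ_top (by omega : 1 ≤ m + 1)]
      have h1 := step m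
      have h2 := mono m
      have h3 : Real.sqrt ((m : ℕ) : ℝ) * Real.log (G m (Real.sqrt m)) = -F m := by
        simp [hF]
      push_cast
      have h4 : D2 / (2 * Real.sqrt ((m:ℝ) + 1)) = (D2 / 2) * (1 / Real.sqrt ((m:ℝ) + 1)) := by
        ring
      linarith
  -- final bound on F N
  have hsN : 0 < Real.sqrt N := Real.sqrt_pos.2 (by exact_mod_cast Nat.pos_of_ne_zero (by omega))
  have hFN : F N ≤ Lc N K + Real.log (1 / q K) * Real.sqrt N := by
    have hterm : q K * Real.exp (-(Lc N K) / Real.sqrt N) ≤ G N (Real.sqrt N) :=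
      Summable.le_tsum (hsumG N _ hsN) K (fun j _ => (mul_pos (hq j) (Real.exp_pos _)).le)
    have htpos : 0 < q K * Real.exp (-(Lc N K) / Real.sqrt N) :=
      mul_pos (hq K) (Real.exp_pos _)
    have hlog : Real.log (q K * Real.exp (-(Lc N K) / Real.sqrt N)) ≤
        Real.log (G N (Real.sqrt N)) := Real.log_le_log htpos hterm
    rw [Real.log_mul (hq K).ne' (Real.exp_pos _).ne', Real.log_exp] at hlog
    have h5 : F N ≤ -Real.sqrt N * (Real.log (q K) + -(Lc N K) / Real.sqrt N) := by
      rw [hF]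
      have := mul_le_mul_of_nonneg_left hlog hsN.le
      nlinarith [this]
    have h6 : -Real.sqrt N * (Real.log (q K) + -(Lc N K) / Real.sqrt N) =
        Lc N K - Real.sqrt N * Real.log (q K) := by
      field_simp
      ring
    rw [h6] at h5
    rw [one_div, Real.log_inv]
    linarith
  have hsum := sum_inv_sqrt N
  have := tele N
  have hfin : (D2 / 2) * ∑ n ∈ Finset.Icc 1 N, 1 / Real.sqrt n ≤ (D2 / 2) * (2 * Real.sqrt N) :=
    mul_le_mul_of_nonneg_left hsum (by positivity)
  calc ∑ n ∈ Finset.Icc 1 N, ℓ n ≤ F N + (D2 / 2) * ∑ n ∈ Finset.Icc 1 N, 1 / Real.sqrt n := this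
    _ ≤ (Lc N K + Real.log (1 / q K) * Real.sqrt N) + D2 * Real.sqrt N := by linarith
    _ = Lc N K + (D2 + Real.log (1 / q K)) * Real.sqrt N := by ring
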